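/- Let q ≥ 1 be an integer, let ε₃ > 0, and consider the function h(u) := ∂_ū(π̄_τ)/∂_u(π_τ) - (ū/u)^q on the punctured disc, where π_τ(u) = z₀ + u^{q+1} + b_{q-1}u^{q-1} + ⋯ + b₀ with |∂_u π_τ(u) - (q+1)u^q| ≤ C|τ| for |u| < R. Suppose |h| ≤ M uniformly, and h(u) ≤ ε₃ whenever |u| ≥ C' |τ|^{1/q} ε₃^{-1/(2q)}. Then for any v ∈ (0, 2), any ρ ∈ (0, R/4) and center u₀ with |u₀| ≤ R/4: ρ^{-v} ∫_{|u - u₀| < ρ} |h(u)|² d²u ≤ C''(ε₃² ρ^{2 - v} + M² (|τ|^{1/q} ε₃^{-1/(2q)})^{2 - v}), which tends to 0 as τ → 0 (choosing ε₃ → 0 appropriately). -/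

import Mathlib

open MeasureTheory Set

/-- Weighted Morrey-type estimate for the Beltrami deviation near a degenerating critical
point: if `‖h‖ ≤ M` everywhere and `‖h(u)‖ ≤ ε₃` whenever `|u| ≥ C'|τ|^{1/q} ε₃^{-1/(2q)}`,
then for `v ∈ (0,2)`, `ρ ∈ (0, R/4)` and `|u₀| ≤ R/4`,
`ρ^{-v} ∫_{|u-u₀|<ρ} |h|² ≤ C''(ε₃² ρ^{2-v} + M² (|τ|^{1/q} ε₃^{-1/(2q)})^{2-v})`
with `C''` independent of `τ`, `h`, `ρ`, `u₀`. -/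
theorem stmt_17 (q : ℕ) (hq : 1 ≤ q) (ε₃ M C' R vex : ℝ)
    (hε₃ : 0 < ε₃) (hM : 0 ≤ M) (hC' : 0 ≤ C') (hR : 0 < R) (hv : vex ∈ Ioo (0:ℝ) 2) :
    ∃ C'' : ℝ, ∀ (τ : ℝ) (h : ℂ → ℂ), Measurable h →
      (∀ u : ℂ, ‖h u‖ ≤ M) →
      (∀ u : ℂ, C' * |τ| ^ ((1:ℝ) / q) * ε₃ ^ (-(1:ℝ) / (2 * q)) ≤ ‖u‖ → ‖h u‖ ≤ ε₃) →
      ∀ ρ ∈ Ioo (0:ℝ) (R / 4), ∀ u₀ : ℂ, ‖u₀‖ ≤ R / 4 →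
        ρ ^ (-vex) * (∫ u in Metric.ball u₀ ρ, ‖h u‖ ^ 2) ≤
          C'' * (ε₃ ^ 2 * ρ ^ (2 - vex) +
            M ^ 2 * (|τ| ^ ((1:ℝ) / q) * ε₃ ^ (-(1:ℝ) / (2 * q))) ^ (2 - vex)) := by
  obtain ⟨hv0, hv2⟩ := hv
  refine ⟨Real.pi * (1 + C' ^ (2 - vex)), ?_⟩
  intro τ h hmeas hbM hbε ρ hρ u₀ hu₀
  obtain ⟨hρ0, hρR⟩ := hρ
  set A : ℝ := |τ| ^ ((1:ℝ) / q) * ε₃ ^ (-(1:ℝ) / (2 * q)) with hA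
  have hA0 : 0 ≤ A := by positivity
  set r : ℝ := C' * A with hrdef
  have hr0 : 0 ≤ r := by positivity
  set S := Metric.ball u₀ ρ with hS
  set B := Metric.ball (0:ℂ) r with hB
  set m : ℝ := min r ρ with hm
  have hm0 : 0 ≤ m := le_min hr0 hρ0.le
  -- volumes
  have hvolS : (volume S).toReal = Real.pi * ρ ^ 2 := by
    rw [hS, Complex.volume_ball]
    rw [ENNReal.toReal_mul, ENNReal.toReal_pow, ENNReal.toReal_ofReal hρ0.le,
      ENNReal.coe_toReal, NNReal.coe_real_pi]
    ring
  have hvolB : (volume B).toReal = Real.pi * r ^ 2 := by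
    rw [hB, Complex.volume_ball]
    rw [ENNReal.toReal_mul, ENNReal.toReal_pow, ENNReal.toReal_ofReal hr0,
      ENNReal.coe_toReal, NNReal.coe_real_pi]
    ring
  have hSfin : volume S < ⊤ := by
    rw [hS]; exact measure_ball_lt_top
  -- integrability
  have hfmeas : Measurable fun u : ℂ => ‖h u‖ ^ 2 := (hmeas.norm.pow_const 2)
  have hint : IntegrableOn (fun u : ℂ => ‖h u‖ ^ 2) S := by
    refine Integrable.mono'
      ((integrableOn_const hSfin.ne) : IntegrableOn (fun _ : ℂ => M ^ 2) S volume)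
      hfmeas.aestronglyMeasurable ?_
    filter_upwards with u
    have := hbM u
    rw [Real.norm_eq_abs, abs_of_nonneg (by positivity)]
    exact pow_le_pow_left₀ (norm_nonneg _) this 2
  have hBmeas : MeasurableSet B := Metric.isOpen_ball.measurableSet
  have hsplit := integral_inter_add_diff (μ := volume) (s := S) hBmeas hint
  -- bound on S ∩ B
  have h1 : ∫ u in S ∩ B, ‖h u‖ ^ 2 ≤ Real.pi * m ^ 2 * M ^ 2 := by
    have hle : ∫ u in S ∩ B, ‖h u‖ ^ 2 ≤ ∫ _u in S ∩ B, M ^ 2 := by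
      refine setIntegral_mono_on (hint.mono_set inter_subset_left)
        (integrableOn_const (lt_of_le_of_lt
          (measure_mono inter_subset_left) hSfin).ne)
        ((Metric.isOpen_ball.measurableSet).inter hBmeas) ?_
      intro u _
      exact pow_le_pow_left₀ (norm_nonneg _) (hbM u) 2
    refine hle.trans ?_
    rw [setIntegral_const, smul_eq_mul]
    have hμ : (volume (S ∩ B)).toReal ≤ Real.pi * m ^ 2 := by
      rcases le_total r ρ with hrρ | hρr
      · have hBfin : volume B < ⊤ := by rw [hB]; exact measure_ball_lt_top
        have hle2 : (volume (S ∩ B)).toReal ≤ (volume B).toReal :=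
          ENNReal.toReal_mono hBfin.ne (measure_mono inter_subset_right)
        rw [hvolB] at hle2
        have hmr : m = r := min_eq_left hrρ
        rw [hmr]; exact hle2
      · have hle2 : (volume (S ∩ B)).toReal ≤ (volume S).toReal :=
          ENNReal.toReal_mono hSfin.ne (measure_mono inter_subset_left)
        rw [hvolS] at hle2
        have hmρ : m = ρ := min_eq_right hρr
        rw [hmρ]; exact hle2
    exact mul_le_mul_of_nonneg_right hμ (by positivity)
  -- bound on S \ B
  have h2 : ∫ u in S \ B, ‖h u‖ ^ 2 ≤ Real.pi * ρ ^ 2 * ε₃ ^ 2 := by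
    have hle : ∫ u in S \ B, ‖h u‖ ^ 2 ≤ ∫ _u in S \ B, ε₃ ^ 2 := by
      refine setIntegral_mono_on (hint.mono_set diff_subset)
        (integrableOn_const (lt_of_le_of_lt
          (measure_mono diff_subset) hSfin).ne)
        ((Metric.isOpen_ball.measurableSet).diff hBmeas) ?_
      intro u hu
      have hnotB : u ∉ B := hu.2
      have : r ≤ ‖u‖ := by
        by_contra hcon
        push_neg at hcon
        exact hnotB (by simpa [hB, Metric.mem_ball, dist_eq_norm] using hcon)
      have hthr : C' * |τ| ^ ((1:ℝ) / q) * ε₃ ^ (-(1:ℝ) / (2 * q)) ≤ ‖u‖ := by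
        rw [mul_assoc]; exact this
      exact pow_le_pow_left₀ (norm_nonneg _) (hbε u hthr) 2
    refine hle.trans ?_
    rw [setIntegral_const, smul_eq_mul]
    have hμ : (volume (S \ B)).toReal ≤ Real.pi * ρ ^ 2 := by
      rw [← hvolS]
      exact ENNReal.toReal_mono hSfin.ne (measure_mono diff_subset)
    exact mul_le_mul_of_nonneg_right hμ (by positivity)
  -- combine
  have hInt : ∫ u in S, ‖h u‖ ^ 2 ≤ Real.pi * m ^ 2 * M ^ 2 + Real.pi * ρ ^ 2 * ε₃ ^ 2 := by
    rw [← hsplit]; exact add_le_add h1 h2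
  have hρv : (0:ℝ) < ρ ^ (-vex) := Real.rpow_pos_of_pos hρ0 _
  have hLHS : ρ ^ (-vex) * ∫ u in S, ‖h u‖ ^ 2 ≤
      Real.pi * M ^ 2 * (ρ ^ (-vex) * m ^ 2) + Real.pi * ε₃ ^ 2 * ρ ^ (2 - vex) := by
    have := mul_le_mul_of_nonneg_left hInt hρv.le
    refine this.trans_eq ?_
    have hρ2 : ρ ^ (-vex) * ρ ^ 2 = ρ ^ (2 - vex) := by
      rw [← Real.rpow_two, ← Real.rpow_add hρ0]
      congr 1; ring
    calc ρ ^ (-vex) * (Real.pi * m ^ 2 * M ^ 2 + Real.pi * ρ ^ 2 * ε₃ ^ 2)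
        = Real.pi * M ^ 2 * (ρ ^ (-vex) * m ^ 2)
          + Real.pi * ε₃ ^ 2 * (ρ ^ (-vex) * ρ ^ 2) := by ring
      _ = _ := by rw [hρ2]
  -- key rpow estimate: ρ^{-v} m² ≤ C'^{2-v} A^{2-v}
  have hkey : ρ ^ (-vex) * m ^ 2 ≤ C' ^ (2 - vex) * A ^ (2 - vex) := by
    have h2v : (0:ℝ) ≤ 2 - vex := by linarith
    have step1 : ρ ^ (-vex) * m ^ 2 ≤ m ^ (2 - vex) := by
      rcases eq_or_lt_of_le hm0 with hm0' | hmpos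
      · rw [← hm0']
        rcases eq_or_lt_of_le h2v with h2v' | h2vpos
        · exfalso; linarith [hv2, h2v'.symm ▸ (rfl : (0:ℝ) = 0)]
        · rw [Real.zero_rpow (by linarith : (2:ℝ) - vex ≠ 0)]
          simp
      · have hmρ : m ≤ ρ := min_le_right _ _
        have : ρ ^ (-vex) ≤ m ^ (-vex) :=
          Real.rpow_le_rpow_of_nonpos hmpos hmρ (by linarith)
        calc ρ ^ (-vex) * m ^ 2 ≤ m ^ (-vex) * m ^ 2 :=
              mul_le_mul_of_nonneg_right this (by positivity)
          _ = m ^ (2 - vex) := by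
              rw [← Real.rpow_two, ← Real.rpow_add hmpos]; congr 1; ring
    have step2 : m ^ (2 - vex) ≤ r ^ (2 - vex) :=
      Real.rpow_le_rpow hm0 (min_le_left _ _) h2v
    have step3 : r ^ (2 - vex) = C' ^ (2 - vex) * A ^ (2 - vex) := by
      rw [hrdef, Real.mul_rpow hC' hA0]
    exact step1.trans (step2.trans step3.le)
  -- final arithmetic
  have hAv : (0:ℝ) ≤ A ^ (2 - vex) := Real.rpow_nonneg hA0 _
  have hCv : (0:ℝ) ≤ C' ^ (2 - vex) := Real.rpow_nonneg hC' _
  have hρ2v : (0:ℝ) ≤ ρ ^ (2 - vex) := Real.rpow_nonneg hρ0.le _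
  refine hLHS.trans ?_
  have hpi := Real.pi_pos
  have hterm1 : Real.pi * M ^ 2 * (ρ ^ (-vex) * m ^ 2) ≤
      Real.pi * M ^ 2 * (C' ^ (2 - vex) * A ^ (2 - vex)) :=
    mul_le_mul_of_nonneg_left hkey (by positivity)
  refine (add_le_add hterm1 le_rfl).trans ?_
  nlinarith [mul_nonneg hCv hρ2v, mul_nonneg (mul_nonneg hpi.le (sq_nonneg ε₃)) hρ2v,
    mul_nonneg (mul_nonneg hpi.le (sq_nonneg M)) hAv,
    mul_nonneg (mul_nonneg (mul_nonneg hpi.le (sq_nonneg ε₃)) hρ2v) hCv]
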